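/- Let Q, H ∈ 𝕊^d_{++} with H ⪯ Q ⪯ ηH (η ≥ 1) and u ∈ ℝᵈ with Hu ≠ 0 and uᵀQu ≠ uᵀHu. Then the BFGS update BFGS(Q,H,u) = Q − (Quuᵀ Q)/(uᵀQu) + (Huuᵀ H)/(uᵀHu) satisfies H ⪯ BFGS(Q,H,u) ⪯ ηH. -/

import Mathlib

open Matrix

/-- The BFGS update. -/
noncomputable def BFGS {d : ℕ} (Q H : Matrix (Fin d) (Fin d) ℝ) (u : Fin d → ℝ) :
    Matrix (Fin d) (Fin d) ℝ :=
  Q - (u ⬝ᵥ Q.mulVec u)⁻¹ • vecMulVec (Q.mulVec u) (Q.mulVec u)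
    + (u ⬝ᵥ H.mulVec u)⁻¹ • vecMulVec (H.mulVec u) (H.mulVec u)

lemma vecMulVec_mulVec' {d : ℕ} (w v x : Fin d → ℝ) : (vecMulVec w v) *ᵥ x = (v ⬝ᵥ x) • w := by
  ext i
  simp only [mulVec, dotProduct, vecMulVec_apply, Pi.smul_apply, smul_eq_mul, Finset.sum_mul,
    Finset.mul_sum]
  exact Finset.sum_congr rfl fun j _ => by ring

lemma dot_symm' {d : ℕ} (Q : Matrix (Fin d) (Fin d) ℝ) (hQ : Q.IsHermitian) (x u : Fin d → ℝ) :
    x ⬝ᵥ Q *ᵥ u = u ⬝ᵥ Q *ᵥ x := by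
  have hQt : Qᵀ = Q := by
    rw [← conjTranspose_eq_transpose_of_trivial]; exact hQ.eq
  rw [dotProduct_mulVec]
  nth_rewrite 1 [← hQt]
  rw [vecMul_transpose, dotProduct_comm]

/-- Cauchy–Schwarz for a PSD real matrix. -/
lemma psd_cs {d : ℕ} (D : Matrix (Fin d) (Fin d) ℝ) (hD : D.PosSemidef) (x u : Fin d → ℝ) :
    (x ⬝ᵥ D *ᵥ u)^2 ≤ (x ⬝ᵥ D *ᵥ x) * (u ⬝ᵥ D *ᵥ u) := by
  have key : ∀ t : ℝ, 0 ≤ (x ⬝ᵥ D *ᵥ x) * (t*t) + (2 * (x ⬝ᵥ D *ᵥ u)) * t + (u ⬝ᵥ D *ᵥ u) := by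
    intro t
    have h := hD.dotProduct_mulVec_nonneg (t • x + u)
    simp only [star_trivial, mulVec_add, mulVec_smul, dotProduct_add, add_dotProduct,
      smul_dotProduct, dotProduct_smul, smul_eq_mul] at h
    rw [dot_symm' D hD.1 u x] at h
    nlinarith [h]
  have h2 := discrim_le_zero key
  rw [discrim] at h2
  nlinarith [h2]

lemma smul_vmv_herm {d : ℕ} (c : ℝ) (w : Fin d → ℝ) :
    (c • vecMulVec w w).IsHermitian := by
  show _ = _
  ext i j
  simp only [conjTranspose_apply, Matrix.smul_apply, vecMulVec_apply, star_trivial, smul_eq_mul]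
  ring

lemma bfgs_quad {d : ℕ} (Q H : Matrix (Fin d) (Fin d) ℝ) (u x : Fin d → ℝ) :
    x ⬝ᵥ (BFGS Q H u) *ᵥ x
      = x ⬝ᵥ Q *ᵥ x - (u ⬝ᵥ Q *ᵥ u)⁻¹ * (x ⬝ᵥ Q *ᵥ u)^2
        + (u ⬝ᵥ H *ᵥ u)⁻¹ * (x ⬝ᵥ H *ᵥ u)^2 := by
  unfold BFGS
  rw [add_mulVec, sub_mulVec, smul_mulVec, smul_mulVec,
    vecMulVec_mulVec', vecMulVec_mulVec']
  simp only [dotProduct_add, dotProduct_sub, dotProduct_smul, smul_eq_mul, smul_smul]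
  rw [dotProduct_comm (Q *ᵥ u) x, dotProduct_comm (H *ᵥ u) x]
  ring

lemma key1 (a b p q X : ℝ) (hb : 0 < b) (hab : b < a) (hX : 0 ≤ X)
    (hCS : q^2 ≤ X*(a-b)) :
    0 ≤ X - a⁻¹*(p+q)^2 + b⁻¹*p^2 := by
  have hc : 0 < a - b := by linarith
  have ha : 0 < a := hb.trans hab
  have heq : X - a⁻¹*(p+q)^2 + b⁻¹*p^2
      = ((b*q - (a-b)*p)^2 + (b^2 + b*(a-b))*(X*(a-b) - q^2)) / ((a-b)*b*a) := by
    rw [eq_div_iff (ne_of_gt (mul_pos (mul_pos hc hb) ha))]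
    field_simp
    ring
  rw [heq]
  apply div_nonneg
  · have h1 : 0 ≤ (b^2 + b*(a-b))*(X*(a-b) - q^2) := by
      apply mul_nonneg
      · nlinarith
      · linarith
    nlinarith [sq_nonneg (b*q - (a-b)*p)]
  · exact (mul_pos (mul_pos hc hb) ha).le

lemma key2 (a b s p r η X : ℝ) (hb : 0 < b) (ha : 0 < a) (hs : 0 ≤ s)
    (haeq : a = η*b - s) (hη : 1 ≤ η) (hX : 0 ≤ X) (hCS : r^2 ≤ X*s) :
    0 ≤ X + a⁻¹*(η*p - r)^2 - b⁻¹*p^2 := by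
  rcases eq_or_lt_of_le hs with hs0 | hs0
  · have hr : r = 0 := by nlinarith
    have haη : a = η*b := by rw [haeq, ← hs0]; ring
    have hη0 : (0:ℝ) < η := by linarith
    have h1 : b⁻¹*p^2 ≤ a⁻¹*(η*p - r)^2 := by
      rw [hr, haη, sub_zero]
      have heq : (η*b)⁻¹*(η*p)^2 = η*(b⁻¹*p^2) := by
        field_simp
      rw [heq]
      nlinarith [mul_nonneg (inv_nonneg.2 hb.le) (sq_nonneg p)]
    linarith
  · have hXr : r^2/s ≤ X := by
      rw [div_le_iff₀ hs0]; linarith [hCS]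
    have h2 : (p^2*a - (η*p-r)^2*b)/(a*b) ≤ r^2/s := by
      rw [div_le_div_iff₀ (mul_pos ha hb) hs0, haeq]
      have ha' : 0 < η*b - s := haeq ▸ ha
      nlinarith [mul_nonneg (by linarith : (0:ℝ) ≤ η) (sq_nonneg (b*r - s*p)),
        mul_nonneg (mul_nonneg hs0.le (sq_nonneg p))
          (mul_nonneg (by linarith : (0:ℝ) ≤ η - 1) ha'.le)]
    have heq : a⁻¹*(η*p - r)^2 - b⁻¹*p^2 = -((p^2*a - (η*p-r)^2*b)/(a*b)) := by
      field_simp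
      ring
    linarith [heq, h2, hXr]

/-- the BFGS update preserves the sandwich H ⪯ Q ⪯ ηH. -/
theorem bfgs_preserves_sandwich {d : ℕ} (Q H : Matrix (Fin d) (Fin d) ℝ) (u : Fin d → ℝ)
    (η : ℝ) (hη : 1 ≤ η)
    (hQ : Q.PosDef) (hH : H.PosDef)
    (hQH : (Q - H).PosSemidef) (hηH : (η • H - Q).PosSemidef)
    (hu : H.mulVec u ≠ 0) (huQH : u ⬝ᵥ Q.mulVec u ≠ u ⬝ᵥ H.mulVec u) :
    (BFGS Q H u - H).PosSemidef ∧ (η • H - BFGS Q H u).PosSemidef := by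
  have hu0 : u ≠ 0 := by
    rintro rfl; exact hu (mulVec_zero H)
  have ha : 0 < u ⬝ᵥ Q *ᵥ u := by simpa using hQ.dotProduct_mulVec_pos hu0
  have hb : 0 < u ⬝ᵥ H *ᵥ u := by simpa using hH.dotProduct_mulVec_pos hu0
  have hc0 : 0 ≤ u ⬝ᵥ Q *ᵥ u - u ⬝ᵥ H *ᵥ u := by
    have := hQH.dotProduct_mulVec_nonneg u
    simpa [sub_mulVec, dotProduct_sub] using this
  have hab : u ⬝ᵥ H *ᵥ u < u ⬝ᵥ Q *ᵥ u :=
    lt_of_le_of_ne (by linarith) (Ne.symm huQH)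
  have hs : 0 ≤ η * (u ⬝ᵥ H *ᵥ u) - u ⬝ᵥ Q *ᵥ u := by
    have := hηH.dotProduct_mulVec_nonneg u
    simpa [sub_mulVec, smul_mulVec, dotProduct_sub, dotProduct_smul] using this
  have hBh : (BFGS Q H u).IsHermitian := by
    unfold BFGS
    exact ((hQ.1.sub (smul_vmv_herm _ _)).add (smul_vmv_herm _ _))
  have hHsmul : (η • H).IsHermitian := by
    show _ = _
    rw [conjTranspose_smul, hH.1.eq, star_trivial]
  constructor
  · refine PosSemidef.of_dotProduct_mulVec_nonneg (hBh.sub hH.1) fun x => ?_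
    simp only [star_trivial, sub_mulVec, dotProduct_sub, bfgs_quad]
    have hCS := psd_cs (Q - H) hQH x u
    simp only [sub_mulVec, dotProduct_sub] at hCS
    have hX : 0 ≤ x ⬝ᵥ Q *ᵥ x - x ⬝ᵥ H *ᵥ x := by
      have := hQH.dotProduct_mulVec_nonneg x
      simpa [sub_mulVec, dotProduct_sub] using this
    have := key1 (u ⬝ᵥ Q *ᵥ u) (u ⬝ᵥ H *ᵥ u) (x ⬝ᵥ H *ᵥ u)
      (x ⬝ᵥ Q *ᵥ u - x ⬝ᵥ H *ᵥ u) (x ⬝ᵥ Q *ᵥ x - x ⬝ᵥ H *ᵥ x) hb hab hX hCS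
    nlinarith [this]
  · refine PosSemidef.of_dotProduct_mulVec_nonneg (hHsmul.sub hBh) fun x => ?_
    simp only [star_trivial, sub_mulVec, dotProduct_sub, bfgs_quad, smul_mulVec,
      dotProduct_smul, smul_eq_mul]
    have hCS := psd_cs (η • H - Q) hηH x u
    simp only [sub_mulVec, smul_mulVec, dotProduct_sub, dotProduct_smul,
      smul_eq_mul] at hCS
    have hX : 0 ≤ η * (x ⬝ᵥ H *ᵥ x) - x ⬝ᵥ Q *ᵥ x := by
      have := hηH.dotProduct_mulVec_nonneg x
      simpa [sub_mulVec, smul_mulVec, dotProduct_sub, dotProduct_smul] using this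
    have := key2 (u ⬝ᵥ Q *ᵥ u) (u ⬝ᵥ H *ᵥ u) (η * (u ⬝ᵥ H *ᵥ u) - u ⬝ᵥ Q *ᵥ u)
      (x ⬝ᵥ H *ᵥ u) (η * (x ⬝ᵥ H *ᵥ u) - x ⬝ᵥ Q *ᵥ u)
      η (η * (x ⬝ᵥ H *ᵥ x) - x ⬝ᵥ Q *ᵥ x) hb ha hs (by ring) hη hX hCS
    nlinarith [this]
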